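/- Let S and A be finite nonempty sets, α > 0, let d^D : S × A → ℝ satisfy d^D(s,a) > 0 for all (s,a) and ∑_{s,a} d^D(s,a) = 1, and let f : ℝ → ℝ be strictly convex. Then the regularized state-entropy objective G(d) := ∑_s (−(∑_a d(s,a)) · log(∑_a d(s,a))) − α ∑_{s,a} d^D(s,a) · f(d(s,a)/d^D(s,a)) (with the convention 0·log 0 = 0) is strictly concave on the convex set of nonnegative functions d : S × A → ℝ. -/

import Mathlib

open scoped BigOperators

theorem stmt13 {S A : Type*} [Fintype S] [Fintype A] [Nonempty S] [Nonempty A]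
    (α : ℝ) (hα : 0 < α)
    (dD : S → A → ℝ) (hdD : ∀ s a, 0 < dD s a) (hdDsum : ∑ s, ∑ a, dD s a = 1)
    (f : ℝ → ℝ) (hf : StrictConvexOn ℝ Set.univ f) :
    StrictConcaveOn ℝ {d : S → A → ℝ | ∀ s a, 0 ≤ d s a}
      (fun d : S → A → ℝ =>
        (∑ s, -((∑ a, d s a) * Real.log (∑ a, d s a)))
          - α * ∑ s, ∑ a, dD s a * f (d s a / dD s a)) := by
  set D : Set (S → A → ℝ) := {d : S → A → ℝ | ∀ s a, 0 ≤ d s a} with hDdef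
  have hD : Convex ℝ D := by
    intro x hx y hy a b ha hb hab s c
    have h1 := hx s c
    have h2 := hy s c
    simp only [Pi.add_apply, Pi.smul_apply, smul_eq_mul]
    positivity
  -- entropy part is concave
  have h1 : ConcaveOn ℝ D
      (fun d : S → A → ℝ => ∑ s, -((∑ a, d s a) * Real.log (∑ a, d s a))) := by
    refine ⟨hD, ?_⟩
    intro x hx y hy a b ha hb hab
    simp only [Finset.smul_sum, ← Finset.sum_add_distrib]
    apply Finset.sum_le_sum
    intro s _
    have hxs : (0:ℝ) ≤ ∑ c, x s c := Finset.sum_nonneg fun c _ => hx s c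
    have hys : (0:ℝ) ≤ ∑ c, y s c := Finset.sum_nonneg fun c _ => hy s c
    have hcomb : ∑ c, (a • x + b • y) s c = a * (∑ c, x s c) + b * (∑ c, y s c) := by
      simp [Finset.sum_add_distrib, Finset.mul_sum]
    have hkey := Real.concaveOn_negMulLog.2 (Set.mem_Ici.2 hxs) (Set.mem_Ici.2 hys) ha hb hab
    simp only [Real.negMulLog, smul_eq_mul, neg_mul] at hkey ⊢
    rw [hcomb]
    exact hkey
  -- divergence part is strictly convex
  have h2 : StrictConvexOn ℝ D
      (fun d : S → A → ℝ => α * ∑ s, ∑ a, dD s a * f (d s a / dD s a)) := by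
    refine ⟨hD, ?_⟩
    intro x hx y hy hxy a b ha hb hab
    obtain ⟨s₀, hs₀⟩ : ∃ s, x s ≠ y s := by
      by_contra h; push_neg at h; exact hxy (funext h)
    obtain ⟨a₀, ha₀⟩ : ∃ c, x s₀ c ≠ y s₀ c := by
      by_contra h; push_neg at h; exact hs₀ (funext h)
    have hterm_le : ∀ s c, dD s c * f ((a • x + b • y) s c / dD s c)
        ≤ a * (dD s c * f (x s c / dD s c)) + b * (dD s c * f (y s c / dD s c)) := by
      intro s c
      have hco : (a • x + b • y) s c / dD s c
          = a * (x s c / dD s c) + b * (y s c / dD s c) := by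
        field_simp
        simp [Pi.add_apply, Pi.smul_apply, smul_eq_mul]
      rw [hco]
      have := hf.convexOn.2 (Set.mem_univ (x s c / dD s c)) (Set.mem_univ (y s c / dD s c))
        ha.le hb.le hab
      simp only [smul_eq_mul] at this
      calc dD s c * f (a * (x s c / dD s c) + b * (y s c / dD s c))
          ≤ dD s c * (a * f (x s c / dD s c) + b * f (y s c / dD s c)) :=
            mul_le_mul_of_nonneg_left this (hdD s c).le
        _ = a * (dD s c * f (x s c / dD s c)) + b * (dD s c * f (y s c / dD s c)) := by ring
    have hterm_lt : dD s₀ a₀ * f ((a • x + b • y) s₀ a₀ / dD s₀ a₀)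
        < a * (dD s₀ a₀ * f (x s₀ a₀ / dD s₀ a₀)) + b * (dD s₀ a₀ * f (y s₀ a₀ / dD s₀ a₀)) := by
      have hco : (a • x + b • y) s₀ a₀ / dD s₀ a₀
          = a * (x s₀ a₀ / dD s₀ a₀) + b * (y s₀ a₀ / dD s₀ a₀) := by
        field_simp
        simp [Pi.add_apply, Pi.smul_apply, smul_eq_mul]
      rw [hco]
      have hne : x s₀ a₀ / dD s₀ a₀ ≠ y s₀ a₀ / dD s₀ a₀ := by
        intro h
        exact ha₀ ((div_left_inj' (hdD s₀ a₀).ne').mp h)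
      have := hf.2 (Set.mem_univ (x s₀ a₀ / dD s₀ a₀)) (Set.mem_univ (y s₀ a₀ / dD s₀ a₀))
        hne ha hb hab
      simp only [smul_eq_mul] at this
      calc dD s₀ a₀ * f (a * (x s₀ a₀ / dD s₀ a₀) + b * (y s₀ a₀ / dD s₀ a₀))
          < dD s₀ a₀ * (a * f (x s₀ a₀ / dD s₀ a₀) + b * f (y s₀ a₀ / dD s₀ a₀)) :=
            mul_lt_mul_of_pos_left this (hdD s₀ a₀)
        _ = a * (dD s₀ a₀ * f (x s₀ a₀ / dD s₀ a₀)) + b * (dD s₀ a₀ * f (y s₀ a₀ / dD s₀ a₀)) := by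
            ring
    have hsum : (∑ s, ∑ c, dD s c * f ((a • x + b • y) s c / dD s c))
        < ∑ s, ∑ c, (a * (dD s c * f (x s c / dD s c)) + b * (dD s c * f (y s c / dD s c))) := by
      apply Finset.sum_lt_sum
      · intro s _
        exact Finset.sum_le_sum fun c _ => hterm_le s c
      · refine ⟨s₀, Finset.mem_univ s₀, ?_⟩
        exact Finset.sum_lt_sum (fun c _ => hterm_le s₀ c) ⟨a₀, Finset.mem_univ a₀, hterm_lt⟩
    have hrw : ∑ s, ∑ c, (a * (dD s c * f (x s c / dD s c)) + b * (dD s c * f (y s c / dD s c)))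
        = a * (∑ s, ∑ c, dD s c * f (x s c / dD s c))
          + b * (∑ s, ∑ c, dD s c * f (y s c / dD s c)) := by
      simp [Finset.sum_add_distrib, Finset.mul_sum]
    simp only [smul_eq_mul]
    calc α * ∑ s, ∑ c, dD s c * f ((a • x + b • y) s c / dD s c)
        < α * (a * (∑ s, ∑ c, dD s c * f (x s c / dD s c))
            + b * (∑ s, ∑ c, dD s c * f (y s c / dD s c))) := by
          apply mul_lt_mul_of_pos_left _ hα
          rw [← hrw]; exact hsum
      _ = a * (α * ∑ s, ∑ c, dD s c * f (x s c / dD s c))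
          + b * (α * ∑ s, ∑ c, dD s c * f (y s c / dD s c)) := by ring
  have := h1.add_strictConcaveOn h2.neg
  convert this using 1
  · rfl
  · funext d
    simp [sub_eq_add_neg]
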